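/- For the map δ on sl_{n+1}(ℂ) defined by δ(E_{i,j}) = (1/(2n+2)) Σ_{k} (E_{i,k} ⊗ E_{k,j} − E_{k,j} ⊗ E_{i,k}), the composition of the Lie bracket (viewed as a linear map sl_{n+1} ⊗ sl_{n+1} → sl_{n+1}) with δ is the identity map on sl_{n+1}(ℂ). -/

import Mathlib

open TensorProduct Matrix LieAlgebra.SpecialLinear

abbrev glC (m : ℕ) := Matrix (Fin m) (Fin m) ℂ

abbrev EM {m : ℕ} (i j : Fin m) : glC m := Matrix.single i j 1

/-- The bracket `[x,y] = xy - yx` as a linear map `gl ⊗ gl →ₗ gl`. -/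
noncomputable abbrev brMap (m : ℕ) : glC m ⊗[ℂ] glC m →ₗ[ℂ] glC m :=
  TensorProduct.lift (LinearMap.mul ℂ (glC m) - (LinearMap.mul ℂ (glC m)).flip)

lemma brMap_tmul (m : ℕ) (a b : glC m) : brMap m (a ⊗ₜ[ℂ] b) = a * b - b * a := rfl

lemma sum_diag_eq_one (m : ℕ) : ∑ k : Fin (m + 1), EM k k = (1 : glC (m + 1)) := by
  ext a b
  by_cases h : a = b
  · simp [Matrix.sum_apply, Matrix.single, Matrix.one_apply, h, Finset.sum_ite_eq,
      and_comm]
  · simp only [Matrix.sum_apply, Matrix.single, Matrix.of_apply, Matrix.one_apply, h,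
      if_false]
    refine Finset.sum_eq_zero fun k _ => ?_
    rw [if_neg]
    rintro ⟨rfl, rfl⟩
    exact h rfl

lemma key (n : ℕ) (i j : Fin (n + 1)) :
    brMap (n + 1) (∑ k : Fin (n + 1), (EM i k ⊗ₜ[ℂ] EM k j - EM k j ⊗ₜ[ℂ] EM i k))
      = (2 * (n : ℂ) + 2) • EM i j - (if i = j then (2 : ℂ) • (1 : glC (n + 1)) else 0) := by
  have h1 : ∑ k : Fin (n + 1), (EM i k * EM k j : glC (n + 1)) = ((n : ℂ) + 1) • EM i j := by
    simp [Matrix.single_mul_single_same, Finset.sum_const]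
  have h2 : ∑ k : Fin (n + 1), (EM k j * EM i k : glC (n + 1)) =
      if i = j then (1 : glC (n + 1)) else 0 := by
    by_cases h : i = j
    · subst h
      simp [Matrix.single_mul_single_same, sum_diag_eq_one]
    · have h' : j ≠ i := fun hji => h hji.symm
      simp only [h, if_false]
      refine Finset.sum_eq_zero fun k _ => ?_
      exact Matrix.single_mul_single_of_ne (c := 1) k j i h' 1
  rw [map_sum]
  simp only [map_sub, brMap_tmul]
  have hk : ∀ k : Fin (n + 1),
      (EM i k * EM k j - EM k j * EM i k) - (EM k j * EM i k - EM i k * EM k j)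
        = (2 : ℂ) • (EM i k * EM k j) - (2 : ℂ) • (EM k j * EM i k) := by
    intro k; module
  rw [Finset.sum_congr rfl fun k _ => hk k, Finset.sum_sub_distrib, ← Finset.smul_sum,
    ← Finset.smul_sum, h1, h2, smul_smul]
  have h3 : (2 : ℂ) * ((n : ℂ) + 1) = 2 * (n : ℂ) + 2 := by ring
  rw [h3]
  congr 1
  split <;> simp

lemma brMap_delta (n : ℕ)
    (δ : glC (n + 1) →ₗ[ℂ] glC (n + 1) ⊗[ℂ] glC (n + 1))
    (hδ : ∀ i j : Fin (n + 1),
      δ (EM i j) = (1 / (2 * (n : ℂ) + 2)) •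
        ∑ k : Fin (n + 1), (EM i k ⊗ₜ[ℂ] EM k j - EM k j ⊗ₜ[ℂ] EM i k))
    (i j : Fin (n + 1)) :
    brMap (n + 1) (δ (EM i j))
      = EM i j - (if i = j then ((n : ℂ) + 1)⁻¹ • (1 : glC (n + 1)) else 0) := by
  have hn1 : ((n : ℂ) + 1) ≠ 0 := by
    exact_mod_cast Nat.cast_add_one_ne_zero (R := ℂ) n
  have hne : (2 * (n : ℂ) + 2) ≠ 0 := by
    have h2 : (2 * (n : ℂ) + 2) = 2 * ((n : ℂ) + 1) := by ring
    rw [h2]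
    exact mul_ne_zero two_ne_zero hn1
  rw [hδ, LinearMap.map_smul, key, smul_sub, smul_smul, one_div, inv_mul_cancel₀ hne, one_smul]
  congr 1
  by_cases h : i = j
  · simp only [h, if_true, smul_smul]
    congr 1
    field_simp
  · simp [h]

/-- the composition of the bracket (as a linear map
`sl ⊗ sl → sl`) with `δ` is the identity on `sl_{n+1}(ℂ)`. -/
theorem statement2 (n : ℕ)
    (δ : glC (n + 1) →ₗ[ℂ] glC (n + 1) ⊗[ℂ] glC (n + 1))
    (hδ : ∀ i j : Fin (n + 1),
      δ (EM i j) = (1 / (2 * (n : ℂ) + 2)) •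
        ∑ k : Fin (n + 1), (EM i k ⊗ₜ[ℂ] EM k j - EM k j ⊗ₜ[ℂ] EM i k)) :
    ∀ x ∈ sl (Fin (n + 1)) ℂ, brMap (n + 1) (δ x) = x := by
  intro x hx
  have htr : Matrix.trace x = 0 := hx
  have hsb : ∀ i j : Fin (n+1), Matrix.single i j (x i j) = x i j • EM i j := by
    intro i j
    rw [Matrix.smul_single, smul_eq_mul, mul_one]
  conv_lhs => rw [matrix_eq_sum_single x]
  simp only [hsb, map_sum, LinearMap.map_smul, brMap_delta n δ hδ]
  simp only [smul_sub, Finset.sum_sub_distrib]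
  have hx' : ∑ i : Fin (n+1), ∑ j : Fin (n+1), x i j • EM i j = x := by
    conv_rhs => rw [matrix_eq_sum_single x]
    simp only [hsb]
  rw [hx']
  have hz : ∑ i : Fin (n+1), ∑ j : Fin (n+1),
      x i j • (if i = j then ((n : ℂ) + 1)⁻¹ • (1 : glC (n + 1)) else 0) = 0 := by
    have hrow : ∀ i : Fin (n+1), ∑ j : Fin (n+1),
        x i j • (if i = j then ((n : ℂ) + 1)⁻¹ • (1 : glC (n + 1)) else 0)
          = x i i • ((n : ℂ) + 1)⁻¹ • (1 : glC (n + 1)) := by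
      intro i
      simp only [smul_ite, smul_zero]
      exact Finset.sum_ite_eq Finset.univ i
        (fun j => x i j • ((n : ℂ) + 1)⁻¹ • (1 : glC (n+1))) |>.trans (by simp)
    rw [Finset.sum_congr rfl fun i _ => hrow i, ← Finset.sum_smul]
    have : ∑ i : Fin (n+1), x i i = 0 := htr
    rw [this, zero_smul]
  rw [hz, sub_zero]
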